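/- With the sequences (a_i), (c_i) as above (c_{i+1} = (c_i + a_i)²/(c_{i-1} + a_i) - a_i, 0 < c_1 < c_0, a_i > 0, a_i(c_{i-1} - 2c_i) < c_i²), the sequence (c_i) is strictly decreasing: c_{i+1} < c_i for all i ≥ 0. -/

import Mathlib

/-- With `c 0 = c > 0`, `0 < c 1 < c 0`, and for every `i ≥ 1` a choice of `a i` with
`0 < a i < a (i-1)` (the constraint on `a 1` being only `0 < a 1`, since `a 0 = +∞`) and
`a i * (c (i-1) - 2 c i) < (c i)^2`, and the recursion
`c (i+1) = (c i + a i)^2 / (c (i-1) + a i) - a i`, the sequence `c` is strictly decreasing. -/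
theorem c_strict_anti (a c : ℕ → ℝ)
    (hc0 : 0 < c 0) (hc1 : 0 < c 1) (hc10 : c 1 < c 0)
    (ha_pos : ∀ i, 0 < a (i + 1))
    (ha_dec : ∀ i, a (i + 2) < a (i + 1))
    (ha_ineq : ∀ i, a (i + 1) * (c i - 2 * c (i + 1)) < (c (i + 1)) ^ 2)
    (hrec : ∀ i, c (i + 2) = (c (i + 1) + a (i + 1)) ^ 2 / (c i + a (i + 1)) - a (i + 1)) :
    ∀ i, c (i + 1) < c i := by
  have key : ∀ i, 0 < c (i + 1) ∧ c (i + 1) < c i := by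
    intro i
    induction i with
    | zero => exact ⟨hc1, hc10⟩
    | succ n ih =>
      obtain ⟨h1, h2⟩ := ih
      have hcn : 0 < c n := h1.trans h2
      have ha := ha_pos n
      have hden : 0 < c n + a (n + 1) := by linarith
      have heq : c (n + 2) * (c n + a (n + 1))
          = (c (n + 1) + a (n + 1)) ^ 2 - a (n + 1) * (c n + a (n + 1)) := by
        rw [hrec n]
        field_simp
      have hineq := ha_ineq n
      constructor
      · nlinarith [mul_pos hden (ha_pos n)]
      · nlinarith [mul_pos hden (sub_pos.mpr h2)]
  exact fun i => (key i).2
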